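/- Let d ≥ 1 and let (x_n)_{n≥1} be a low-discrepancy sequence in [0,1)^d, i.e. there is a constant C > 0 with D_N*(x_n) ≤ C (log N)^d / N for all N ≥ 2. Then for every α with 0 < α < 1/d and every s > 0, lim_{N→∞} #{(l,m) : 1 ≤ l, m ≤ N, l ≠ m, ‖x_l − x_m‖_∞ ≤ s/N^{α}} / (N² · (2s/N^{α})^d) = 1; that is, (x_n) has converging number variance for every exponent 0 < α < 1/d with respect to ‖·‖_∞. -/

import Mathlib

open scoped Classical

/-- Distance from `x` to the nearest integer. -/
noncomputable def nint (x : ℝ) : ℝ := ⨅ k : ℤ, |x - (k : ℝ)|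

/-- Maximum (sup) torus norm on `ℝ^d` built from the nearest-integer distance. -/
noncomputable def supNint {d : ℕ} (y : Fin d → ℝ) : ℝ := ⨆ i, nint (y i)

/-- Number of ordered pairs `(l,m)`, `1 ≤ l,m ≤ N`, `l ≠ m`, with
`‖x_l - x_m‖_∞ ≤ r`. -/
noncomputable def pairCount (d : ℕ) (x : ℕ → Fin d → ℝ) (N : ℕ) (r : ℝ) : ℕ :=
  (((Finset.Icc 1 N) ×ˢ (Finset.Icc 1 N)).filter
    (fun p => p.1 ≠ p.2 ∧ supNint (fun i => x p.1 i - x p.2 i) ≤ r)).card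

/-- Star-discrepancy of the first `N` points of `x` in `[0,1)^d`: supremum over all
anchored boxes `[0,b) ⊆ [0,1)^d` of `|#{1 ≤ n ≤ N : x_n ∈ [0,b)}/N - vol [0,b)|`. -/
noncomputable def starDiscrepancy (d N : ℕ) (x : ℕ → Fin d → ℝ) : ℝ :=
  sSup {v : ℝ | ∃ b : Fin d → ℝ, (∀ i, 0 < b i ∧ b i ≤ 1) ∧
    v = |(((Finset.Icc 1 N).filter (fun n => ∀ i, 0 ≤ x n i ∧ x n i < b i)).card : ℝ) / N
      - ∏ i, b i|}

-- ## nint lemmas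

lemma nint_bddBelow (t : ℝ) : BddBelow (Set.range fun k : ℤ => |t - (k : ℝ)|) :=
  ⟨0, by rintro _ ⟨k, rfl⟩; exact abs_nonneg _⟩

lemma nint_le (t : ℝ) (k : ℤ) : nint t ≤ |t - (k : ℝ)| :=
  ciInf_le (nint_bddBelow t) k

lemma nint_lt (t a : ℝ) (h : nint t < a) : ∃ k : ℤ, |t - (k : ℝ)| < a :=
  exists_lt_of_ciInf_lt h

lemma nint_neg (t : ℝ) : nint (-t) = nint t := by
  have h : ∀ u : ℝ, nint (-u) ≤ nint u := by
    intro u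
    refine le_ciInf fun k => ?_
    exact (nint_le (-u) (-k)).trans_eq
      (by rw [show -u - ((-k : ℤ) : ℝ) = -(u - k) by push_cast; ring, abs_neg])
  exact le_antisymm (h t) (by simpa using h (-t))

-- ## discrepancy lemmas

lemma starDiscrepancy_bddAbove (d N : ℕ) (x : ℕ → Fin d → ℝ) :
    BddAbove {v : ℝ | ∃ b : Fin d → ℝ, (∀ i, 0 < b i ∧ b i ≤ 1) ∧
    v = |(((Finset.Icc 1 N).filter (fun n => ∀ i, 0 ≤ x n i ∧ x n i < b i)).card : ℝ) / N
      - ∏ i, b i|} := by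
  refine ⟨2, ?_⟩
  rintro v ⟨b, hb, rfl⟩
  have h1 : (((Finset.Icc 1 N).filter (fun n => ∀ i, 0 ≤ x n i ∧ x n i < b i)).card : ℝ) / N ≤ 1 := by
    rcases Nat.eq_zero_or_pos N with h | h
    · simp [h]
    · rw [div_le_one (by positivity)]
      have := Finset.card_filter_le (Finset.Icc 1 N) (fun n => ∀ i, 0 ≤ x n i ∧ x n i < b i)
      have h2 : (Finset.Icc 1 N).card = N := by simp
      exact_mod_cast h2 ▸ this
  have h2 : (0:ℝ) ≤ ∏ i, b i := Finset.prod_nonneg fun i _ => (hb i).1.le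
  have h3 : ∏ i, b i ≤ 1 := Finset.prod_le_one (fun i _ => (hb i).1.le) (fun i _ => (hb i).2)
  have h4 : (0:ℝ) ≤ (((Finset.Icc 1 N).filter (fun n => ∀ i, 0 ≤ x n i ∧ x n i < b i)).card : ℝ) / N := by
    positivity
  rw [abs_le]; constructor <;> linarith

lemma starDiscrepancy_nonneg (d N : ℕ) (x : ℕ → Fin d → ℝ) :
    0 ≤ starDiscrepancy d N x := by
  have hmem : |(((Finset.Icc 1 N).filter (fun n => ∀ i, 0 ≤ x n i ∧ x n i < (fun _ : Fin d => (1:ℝ)) i)).card : ℝ) / N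
      - ∏ i : Fin d, (1:ℝ)| ∈ {v : ℝ | ∃ b : Fin d → ℝ, (∀ i, 0 < b i ∧ b i ≤ 1) ∧
    v = |(((Finset.Icc 1 N).filter (fun n => ∀ i, 0 ≤ x n i ∧ x n i < b i)).card : ℝ) / N
      - ∏ i, b i|} := ⟨fun _ => 1, fun i => ⟨one_pos, le_refl 1⟩, rfl⟩
  exact le_trans (abs_nonneg _) (le_csSup (starDiscrepancy_bddAbove d N x) hmem)

lemma starDiscrepancy_le (d N : ℕ) (x : ℕ → Fin d → ℝ) (b : Fin d → ℝ)
    (hb : ∀ i, 0 < b i ∧ b i ≤ 1) :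
    |(((Finset.Icc 1 N).filter (fun n => ∀ i, 0 ≤ x n i ∧ x n i < b i)).card : ℝ) / N
      - ∏ i, b i| ≤ starDiscrepancy d N x :=
  le_csSup (starDiscrepancy_bddAbove d N x) ⟨b, hb, rfl⟩

-- anchored box sum bound
lemma anchored (d N : ℕ) (x : ℕ → Fin d → ℝ) (hx : ∀ n i, 0 ≤ x n i) (b : Fin d → ℝ)
    (hb0 : ∀ i, 0 ≤ b i) (hb1 : ∀ i, b i ≤ 1) :
    |(∑ n ∈ Finset.Icc 1 N, ∏ i, if x n i < b i then (1:ℝ) else 0) - N * ∏ i, b i|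
      ≤ N * starDiscrepancy d N x := by
  by_cases hball : ∀ i, 0 < b i
  · -- sum = card
    have hsum : (∑ n ∈ Finset.Icc 1 N, ∏ i, if x n i < b i then (1:ℝ) else 0)
        = (((Finset.Icc 1 N).filter (fun n => ∀ i, 0 ≤ x n i ∧ x n i < b i)).card : ℝ) := by
      rw [Finset.card_filter]
      push_cast
      refine Finset.sum_congr rfl fun n _ => ?_
      rw [Finset.prod_boole]
      congr 1
      simp only [eq_iff_iff]
      constructor
      · intro h i; exact ⟨hx n i, h i (Finset.mem_univ i)⟩
      · intro h i _; exact (h i).2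
    rcases Nat.eq_zero_or_pos N with hN | hN
    · subst hN; simp
    have hNpos : (0:ℝ) < N := by positivity
    rw [hsum]
    have key : |((((Finset.Icc 1 N).filter (fun n => ∀ i, 0 ≤ x n i ∧ x n i < b i)).card : ℝ))
        - N * ∏ i, b i| = N * |((((Finset.Icc 1 N).filter (fun n => ∀ i, 0 ≤ x n i ∧ x n i < b i)).card : ℝ)) / N - ∏ i, b i| := by
      rw [← abs_of_pos hNpos, ← abs_mul]
      congr 1
      field_simp
      rw [abs_of_pos hNpos]; ring
    rw [key]
    exact mul_le_mul_of_nonneg_left (starDiscrepancy_le d N x b (fun i => ⟨hball i, hb1 i⟩)) hNpos.le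
  · push_neg at hball
    obtain ⟨i0, hi0⟩ := hball
    have hb00 : b i0 = 0 := le_antisymm hi0 (hb0 i0)
    have h1 : (∑ n ∈ Finset.Icc 1 N, ∏ i, if x n i < b i then (1:ℝ) else 0) = 0 := by
      refine Finset.sum_eq_zero fun n _ => ?_
      refine Finset.prod_eq_zero (Finset.mem_univ i0) ?_
      rw [if_neg]
      rw [hb00]
      exact not_lt.2 (hx n i0)
    have h2 : ∏ i, b i = 0 := Finset.prod_eq_zero (Finset.mem_univ i0) hb00
    rw [h1, h2]
    simp only [mul_zero, sub_zero, abs_zero]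
    exact mul_nonneg (Nat.cast_nonneg N) (starDiscrepancy_nonneg d N x)

lemma chi_sub (a b y : ℝ) (hab : a ≤ b) :
    (if y < b then (1:ℝ) else 0) - (if y < a then 1 else 0)
      = if a ≤ y ∧ y < b then 1 else 0 := by
  rcases lt_or_ge y a with h|h
  · rw [if_pos (h.trans_le hab), if_pos h,
      if_neg (by rintro ⟨h1, _⟩; exact absurd h (not_lt.2 h1))]
    ring
  · rcases lt_or_ge y b with h2|h2
    · rw [if_pos h2, if_neg (not_lt.2 h), if_pos ⟨h, h2⟩]; ring
    · rw [if_neg (not_lt.2 h2), if_neg (not_lt.2 h),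
        if_neg (by rintro ⟨_, h3⟩; exact absurd h3 (not_lt.2 h2))]
      ring

lemma prod_neg' {ι : Type*} (s : Finset ι) (f : ι → ℝ) :
    ∏ i ∈ s, (-f i) = (-1)^s.card * ∏ i ∈ s, f i := by
  rw [← Finset.prod_const, ← Finset.prod_mul_distrib]
  simp

lemma boxcount (d N : ℕ) (x : ℕ → Fin d → ℝ) (hx : ∀ n i, 0 ≤ x n i) (a b : Fin d → ℝ) (ha : ∀ i, 0 ≤ a i)
    (hab : ∀ i, a i ≤ b i) (hb1 : ∀ i, b i ≤ 1) :
    |(∑ n ∈ Finset.Icc 1 N, ∏ i, (if a i ≤ x n i ∧ x n i < b i then (1:ℝ) else 0))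
      - N * ∏ i, (b i - a i)| ≤ 2^d * (N * starDiscrepancy d N x) := by
  have hrw : ∀ n, (∏ i, (if a i ≤ x n i ∧ x n i < b i then (1:ℝ) else 0))
      = ∑ t ∈ (Finset.univ : Finset (Fin d)).powerset,
          (-1)^((Finset.univ \ t).card) * ∏ i, (if x n i < (if i ∈ t then b i else a i) then (1:ℝ) else 0) := by
    intro n
    have h1 : (∏ i, (if a i ≤ x n i ∧ x n i < b i then (1:ℝ) else 0))
        = ∏ i, ((if x n i < b i then (1:ℝ) else 0) + (- if x n i < a i then (1:ℝ) else 0)) := by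
      refine Finset.prod_congr rfl fun i _ => ?_
      rw [← sub_eq_add_neg, chi_sub _ _ _ (hab i)]
    rw [h1, Finset.prod_add]
    refine Finset.sum_congr rfl fun t ht => ?_
    rw [prod_neg']
    have hsplit : ∏ i, (if x n i < (if i ∈ t then b i else a i) then (1:ℝ) else 0)
        = (∏ i ∈ t, (if x n i < (if i ∈ t then b i else a i) then (1:ℝ) else 0))
          * ∏ i ∈ Finset.univ \ t, (if x n i < (if i ∈ t then b i else a i) then (1:ℝ) else 0) := by
      rw [← Finset.compl_eq_univ_sdiff, Finset.prod_mul_prod_compl]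
    rw [hsplit]
    have e2 : (∏ i ∈ t, (if x n i < (if i ∈ t then b i else a i) then (1:ℝ) else 0))
        = ∏ i ∈ t, (if x n i < b i then (1:ℝ) else 0) :=
      Finset.prod_congr rfl fun i hi => by rw [if_pos hi]
    have e3 : (∏ i ∈ Finset.univ \ t, (if x n i < (if i ∈ t then b i else a i) then (1:ℝ) else 0))
        = ∏ i ∈ Finset.univ \ t, (if x n i < a i then (1:ℝ) else 0) :=
      Finset.prod_congr rfl fun i hi => by
        rw [if_neg (Finset.mem_sdiff.1 hi).2]
    rw [e2, e3]
    ring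
  have hvol : ∏ i, (b i - a i)
      = ∑ t ∈ (Finset.univ : Finset (Fin d)).powerset,
          (-1)^((Finset.univ \ t).card) * ∏ i, (if i ∈ t then b i else a i) := by
    have h1 : ∏ i, (b i - a i) = ∏ i, (b i + (- a i)) := by
      refine Finset.prod_congr rfl fun i _ => by ring
    rw [h1, Finset.prod_add]
    refine Finset.sum_congr rfl fun t ht => ?_
    rw [prod_neg']
    have hsplit : ∏ i, (if i ∈ t then b i else a i)
        = (∏ i ∈ t, (if i ∈ t then b i else a i))
          * ∏ i ∈ Finset.univ \ t, (if i ∈ t then b i else a i) := by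
      rw [← Finset.compl_eq_univ_sdiff, Finset.prod_mul_prod_compl]
    rw [hsplit,
      Finset.prod_congr rfl (fun i hi => if_pos hi : ∀ i ∈ t, (if i ∈ t then b i else a i) = b i),
      Finset.prod_congr rfl (fun i hi => if_neg (Finset.mem_sdiff.1 hi).2 :
        ∀ i ∈ Finset.univ \ t, (if i ∈ t then b i else a i) = a i)]
    ring
  have e1 : (∑ n ∈ Finset.Icc 1 N, ∏ i, (if a i ≤ x n i ∧ x n i < b i then (1:ℝ) else 0))
      = ∑ t ∈ (Finset.univ : Finset (Fin d)).powerset, (-1)^((Finset.univ \ t).card)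
          * ∑ n ∈ Finset.Icc 1 N, ∏ i, (if x n i < (if i ∈ t then b i else a i) then (1:ℝ) else 0) := by
    rw [Finset.sum_congr rfl (fun n _ => hrw n), Finset.sum_comm]
    exact Finset.sum_congr rfl fun t _ => (Finset.mul_sum _ _ _).symm
  rw [e1, hvol, Finset.mul_sum, ← Finset.sum_sub_distrib]
  refine le_trans (Finset.abs_sum_le_sum_abs _ _) ?_
  have hterm : ∀ t ∈ (Finset.univ : Finset (Fin d)).powerset,
      |(-1:ℝ)^((Finset.univ \ t).card)
          * (∑ n ∈ Finset.Icc 1 N, ∏ i, (if x n i < (if i ∈ t then b i else a i) then (1:ℝ) else 0))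
        - N * ((-1)^((Finset.univ \ t).card) * ∏ i, (if i ∈ t then b i else a i))|
        ≤ N * starDiscrepancy d N x := by
    intro t _
    have : (-1:ℝ)^((Finset.univ \ t).card)
          * (∑ n ∈ Finset.Icc 1 N, ∏ i, (if x n i < (if i ∈ t then b i else a i) then (1:ℝ) else 0))
        - N * ((-1)^((Finset.univ \ t).card) * ∏ i, (if i ∈ t then b i else a i))
        = (-1:ℝ)^((Finset.univ \ t).card) *
          ((∑ n ∈ Finset.Icc 1 N, ∏ i, (if x n i < (if i ∈ t then b i else a i) then (1:ℝ) else 0))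
            - N * ∏ i, (if i ∈ t then b i else a i)) := by ring
    rw [this, abs_mul, abs_pow, abs_neg, abs_one, one_pow, one_mul]
    exact anchored d N x hx _
      (fun i => by
        show 0 ≤ if i ∈ t then b i else a i
        split_ifs with hi
        exacts [(ha i).trans (hab i), ha i])
      (fun i => by
        show (if i ∈ t then b i else a i) ≤ 1
        split_ifs with hi
        exacts [hb1 i, (hab i).trans (hb1 i)])
  refine le_trans (Finset.sum_le_sum hterm) ?_
  rw [Finset.sum_const, Finset.card_powerset, Finset.card_univ, Fintype.card_fin, nsmul_eq_mul]
  push_cast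
  exact le_refl _

noncomputable def ivlo (c r : ℝ) : Fin 3 → ℝ := ![max (c - r) 0, min (c - r + 1) 1, 0]
noncomputable def ivhi (c r : ℝ) : Fin 3 → ℝ := ![min (c + r) 1, 1, max (c + r - 1) 0]

lemma iv_lo_nonneg (c r : ℝ) (hc0 : 0 ≤ c) (hr2 : r ≤ 1/2) (j : Fin 3) : 0 ≤ ivlo c r j := by
  fin_cases j <;> simp [ivlo, max_def, min_def] <;> split_ifs <;> linarith

lemma iv_hi_le_one (c r : ℝ) (hc1 : c < 1) (hr2 : r ≤ 1/2) (j : Fin 3) : ivhi c r j ≤ 1 := by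
  fin_cases j <;> simp [ivhi, max_def, min_def] <;> split_ifs <;> linarith

lemma iv_lo_le_hi (c r : ℝ) (hc0 : 0 ≤ c) (hc1 : c < 1) (hr : 0 < r) (hr2 : r ≤ 1/2) (j : Fin 3) :
    ivlo c r j ≤ ivhi c r j := by
  fin_cases j <;> simp [ivlo, ivhi, max_def, min_def] <;> split_ifs <;> linarith

lemma iv_len_sum (c r : ℝ) : ∑ j, (ivhi c r j - ivlo c r j) = 2 * r := by
  rw [Fin.sum_univ_three]
  simp [ivlo, ivhi, max_def, min_def]
  split_ifs <;> linarith

lemma iv_disj1 (c r : ℝ) (hr2 : r ≤ 1/2) : ivhi c r 2 ≤ ivlo c r 0 := by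
  simp [ivlo, ivhi, max_def, min_def]; split_ifs <;> linarith

lemma iv_disj2 (c r : ℝ) (hr2 : r ≤ 1/2) : ivhi c r 0 ≤ ivlo c r 1 := by
  simp [ivlo, ivhi, max_def, min_def]; split_ifs <;> linarith

lemma iv_mem (c r y : ℝ) (hc0 : 0 ≤ c) (hc1 : c < 1) (hy0 : 0 ≤ y) (hy1 : y < 1) (hr : 0 < r)
    (j : Fin 3) (hlo : ivlo c r j ≤ y) (hhi : y < ivhi c r j) : nint (y - c) ≤ r := by
  fin_cases j
  · have h1 : max (c - r) 0 ≤ y := hlo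
    have h2 : y < min (c + r) 1 := hhi
    have h1' := (le_max_left (c-r) 0).trans h1
    have h2' := h2.trans_le (min_le_left (c+r) 1)
    refine (nint_le (y - c) 0).trans ?_
    rw [abs_le]; push_cast; constructor <;> linarith
  · have h1 : min (c - r + 1) 1 ≤ y := hlo
    rcases min_cases (c - r + 1) 1 with ⟨he, _⟩ | ⟨he, hle⟩ <;> rw [he] at h1
    · refine (nint_le (y - c) 1).trans ?_
      rw [abs_le]; push_cast; constructor <;> linarith
    · linarith
  · have h2 : y < max (c + r - 1) 0 := hhi
    rcases max_cases (c + r - 1) 0 with ⟨he, hle⟩ | ⟨he, _⟩ <;> rw [he] at h2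
    · refine (nint_le (y - c) (-1)).trans ?_
      rw [abs_le]; push_cast; constructor <;> linarith
    · linarith

lemma iv_cover (c r1 r2 y : ℝ) (hc0 : 0 ≤ c) (hc1 : c < 1) (hy0 : 0 ≤ y) (hy1 : y < 1)
    (h : nint (y - c) ≤ r1) (h12 : r1 < r2) (hr2 : r2 ≤ 1/2) :
    ∃ j, ivlo c r2 j ≤ y ∧ y < ivhi c r2 j := by
  obtain ⟨k, hk⟩ := nint_lt (y - c) r2 (lt_of_le_of_lt h h12)
  rw [abs_lt] at hk
  have hk1 : k < 2 := by exact_mod_cast show (k:ℝ) < ((2:ℤ):ℝ) by push_cast; linarith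
  have hk2 : -2 < k := by exact_mod_cast show ((-2:ℤ):ℝ) < (k:ℝ) by push_cast; linarith
  interval_cases k
  · push_cast at hk
    refine ⟨2, le_of_eq rfl |>.trans hy0 |> fun _ => ?_, ?_⟩
    · show (0:ℝ) ≤ y; exact hy0
    · show y < max (c + r2 - 1) 0
      exact lt_max_iff.2 (Or.inl (by linarith))
  · push_cast at hk
    refine ⟨0, ?_, ?_⟩
    · show max (c - r2) 0 ≤ y; exact max_le (by linarith) hy0
    · show y < min (c + r2) 1; exact lt_min (by linarith) hy1
  · push_cast at hk
    refine ⟨1, ?_, ?_⟩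
    · show min (c - r2 + 1) 1 ≤ y; exact le_trans (min_le_left _ _) (by linarith)
    · show y < (1:ℝ); exact hy1

-- ## per-coordinate comparison lemmas

lemma sumchi_le (c r y : ℝ) (hc0 : 0 ≤ c) (hc1 : c < 1) (hy0 : 0 ≤ y) (hy1 : y < 1)
    (hr : 0 < r) (hr2 : r ≤ 1/2) :
    (∑ j, if ivlo c r j ≤ y ∧ y < ivhi c r j then (1:ℝ) else 0)
      ≤ if nint (y - c) ≤ r then 1 else 0 := by
  have hlh := iv_lo_le_hi c r hc0 hc1 hr hr2 0
  have d1 := iv_disj1 c r hr2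
  have d2 := iv_disj2 c r hr2
  by_cases hex : ∃ j, ivlo c r j ≤ y ∧ y < ivhi c r j
  · obtain ⟨j0, hj0⟩ := hex
    rw [if_pos (iv_mem c r y hc0 hc1 hy0 hy1 hr j0 hj0.1 hj0.2)]
    rw [Fin.sum_univ_three]
    have e01 : ¬((ivlo c r 0 ≤ y ∧ y < ivhi c r 0) ∧ (ivlo c r 1 ≤ y ∧ y < ivhi c r 1)) := by
      rintro ⟨⟨_, a⟩, ⟨b, _⟩⟩; linarith
    have e02 : ¬((ivlo c r 0 ≤ y ∧ y < ivhi c r 0) ∧ (ivlo c r 2 ≤ y ∧ y < ivhi c r 2)) := by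
      rintro ⟨⟨a, _⟩, ⟨_, b⟩⟩; linarith
    have e12 : ¬((ivlo c r 1 ≤ y ∧ y < ivhi c r 1) ∧ (ivlo c r 2 ≤ y ∧ y < ivhi c r 2)) := by
      rintro ⟨⟨a, _⟩, ⟨_, b⟩⟩; linarith
    rcases Classical.em (ivlo c r 0 ≤ y ∧ y < ivhi c r 0) with h0|h0 <;>
      rcases Classical.em (ivlo c r 1 ≤ y ∧ y < ivhi c r 1) with h1|h1 <;>
      rcases Classical.em (ivlo c r 2 ≤ y ∧ y < ivhi c r 2) with h2|h2
    · exact absurd ⟨h0, h1⟩ e01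
    · exact absurd ⟨h0, h1⟩ e01
    · exact absurd ⟨h0, h2⟩ e02
    · rw [if_pos h0, if_neg h1, if_neg h2]; norm_num
    · exact absurd ⟨h1, h2⟩ e12
    · rw [if_neg h0, if_pos h1, if_neg h2]; norm_num
    · rw [if_neg h0, if_neg h1, if_pos h2]; norm_num
    · rw [if_neg h0, if_neg h1, if_neg h2]; norm_num
  · push_neg at hex
    rw [Finset.sum_eq_zero fun j _ => if_neg (by rintro ⟨u, v⟩; exact absurd v (not_lt.2 (hex j u)))]
    split_ifs <;> norm_num

lemma ball_le_sumchi (c r1 r2 y : ℝ) (hc0 : 0 ≤ c) (hc1 : c < 1) (hy0 : 0 ≤ y) (hy1 : y < 1)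
    (h12 : r1 < r2) (hr2 : r2 ≤ 1/2) :
    (if nint (y - c) ≤ r1 then (1:ℝ) else 0)
      ≤ ∑ j, if ivlo c r2 j ≤ y ∧ y < ivhi c r2 j then (1:ℝ) else 0 := by
  by_cases h : nint (y - c) ≤ r1
  · rw [if_pos h]
    obtain ⟨j0, hj⟩ := iv_cover c r1 r2 y hc0 hc1 hy0 hy1 h h12 hr2
    calc (1:ℝ) = if ivlo c r2 j0 ≤ y ∧ y < ivhi c r2 j0 then (1:ℝ) else 0 := (if_pos hj).symm
      _ ≤ _ := Finset.single_le_sum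
        (f := fun j => if ivlo c r2 j ≤ y ∧ y < ivhi c r2 j then (1:ℝ) else 0)
        (fun j _ => by
          show (0:ℝ) ≤ if ivlo c r2 j ≤ y ∧ y < ivhi c r2 j then 1 else 0
          split_ifs <;> norm_num) (Finset.mem_univ j0)
  · rw [if_neg h]
    exact Finset.sum_nonneg fun j _ => by split_ifs <;> norm_num

-- ## W count estimate

set_option maxHeartbeats 1000000 in
lemma Wcount (d N : ℕ) (x : ℕ → Fin d → ℝ) (hx : ∀ n i, 0 ≤ x n i ∧ x n i < 1)
    (c : Fin d → ℝ) (hc : ∀ i, 0 ≤ c i ∧ c i < 1) (r : ℝ) (hr : 0 < r) (hr2 : r ≤ 1/2) :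
    |(∑ n ∈ Finset.Icc 1 N, ∏ i,
        ∑ j, if ivlo (c i) r j ≤ x n i ∧ x n i < ivhi (c i) r j then (1:ℝ) else 0)
      - N * (2*r)^d| ≤ 6^d * (N * starDiscrepancy d N x) := by
  have e1 : ∀ n, (∏ i, ∑ j, if ivlo (c i) r j ≤ x n i ∧ x n i < ivhi (c i) r j then (1:ℝ) else 0)
      = ∑ φ ∈ Fintype.piFinset (fun _ : Fin d => (Finset.univ : Finset (Fin 3))),
          ∏ i, (if ivlo (c i) r (φ i) ≤ x n i ∧ x n i < ivhi (c i) r (φ i) then (1:ℝ) else 0) :=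
    fun n => Finset.prod_univ_sum (fun _ : Fin d => (Finset.univ : Finset (Fin 3)))
      (fun i j => if ivlo (c i) r j ≤ x n i ∧ x n i < ivhi (c i) r j then (1:ℝ) else 0)
  have e2 : (∑ φ ∈ Fintype.piFinset (fun _ : Fin d => (Finset.univ : Finset (Fin 3))),
      ∏ i, (ivhi (c i) r (φ i) - ivlo (c i) r (φ i))) = ((2*r)^d : ℝ) := by
    calc (∑ φ ∈ Fintype.piFinset (fun _ : Fin d => (Finset.univ : Finset (Fin 3))),
        ∏ i, (ivhi (c i) r (φ i) - ivlo (c i) r (φ i)))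
        = ∏ i : Fin d, ∑ j, (ivhi (c i) r j - ivlo (c i) r j) :=
          (Finset.prod_univ_sum (fun _ : Fin d => (Finset.univ : Finset (Fin 3)))
            (fun i j => ivhi (c i) r j - ivlo (c i) r j)).symm
      _ = ∏ _i : Fin d, (2*r) := Finset.prod_congr rfl fun i _ => iv_len_sum (c i) r
      _ = (2*r)^d := by rw [Finset.prod_const, Finset.card_univ, Fintype.card_fin]
  rw [Finset.sum_congr rfl (fun n _ => e1 n), Finset.sum_comm, ← e2, Finset.mul_sum,
    ← Finset.sum_sub_distrib]
  refine le_trans (Finset.abs_sum_le_sum_abs _ _) ?_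
  have hterm : ∀ φ ∈ Fintype.piFinset (fun _ : Fin d => (Finset.univ : Finset (Fin 3))),
      |(∑ n ∈ Finset.Icc 1 N, ∏ i, (if ivlo (c i) r (φ i) ≤ x n i ∧ x n i < ivhi (c i) r (φ i) then (1:ℝ) else 0))
        - N * ∏ i, (ivhi (c i) r (φ i) - ivlo (c i) r (φ i))| ≤ 2^d * (N * starDiscrepancy d N x) := by
    intro φ _
    exact boxcount d N x (fun n i => (hx n i).1) _ _
      (fun i => iv_lo_nonneg (c i) r (hc i).1 hr2 (φ i))
      (fun i => iv_lo_le_hi (c i) r (hc i).1 (hc i).2 hr hr2 (φ i))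
      (fun i => iv_hi_le_one (c i) r (hc i).2 hr2 (φ i))
  refine le_trans (Finset.sum_le_sum hterm) ?_
  rw [Finset.sum_const, nsmul_eq_mul]
  rw [Fintype.piFinset_univ, Finset.card_univ]
  rw [show Fintype.card (Fin d → Fin 3) = 3^d from by simp [Fintype.card_fun]]
  push_cast
  rw [show ((6:ℝ))^d = 3^d * 2^d from by rw [← mul_pow]; norm_num]
  rw [mul_assoc]
-- ## main counting bounds

lemma supNint_le_iff (d : ℕ) (hd : 1 ≤ d) (x : ℕ → Fin d → ℝ) (l m : ℕ) (r : ℝ) :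
    supNint (fun i => x l i - x m i) ≤ r ↔ ∀ i, nint (x m i - x l i) ≤ r := by
  have hne : Nonempty (Fin d) := ⟨⟨0, hd⟩⟩
  rw [supNint, ciSup_le_iff (Set.Finite.bddAbove (Set.finite_range _))]
  exact forall_congr' fun i => by
    rw [show x l i - x m i = -(x m i - x l i) by ring, nint_neg]

set_option maxHeartbeats 1000000 in
lemma pair_upper (d N : ℕ) (hd : 1 ≤ d) (x : ℕ → Fin d → ℝ)
    (hx : ∀ n i, 0 ≤ x n i ∧ x n i < 1) (r r2 : ℝ) (hr : 0 < r) (hrr2 : r < r2)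
    (hr2 : r2 ≤ 1/2) :
    (pairCount d x N r : ℝ) ≤ N * (N * (2*r2)^d + 6^d * (N * starDiscrepancy d N x)) := by
  have hcast : (pairCount d x N r : ℝ) = ∑ l ∈ Finset.Icc 1 N, ∑ m ∈ Finset.Icc 1 N,
      (if l ≠ m ∧ supNint (fun i => x l i - x m i) ≤ r then (1:ℝ) else 0) := by
    rw [pairCount, Finset.card_filter]
    push_cast
    rw [Finset.sum_product]
  rw [hcast]
  have hbound : ∀ l ∈ Finset.Icc 1 N, (∑ m ∈ Finset.Icc 1 N,
      (if l ≠ m ∧ supNint (fun i => x l i - x m i) ≤ r then (1:ℝ) else 0))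
      ≤ N * (2*r2)^d + 6^d * (N * starDiscrepancy d N x) := by
    intro l _
    have step1 : ∀ m, (if l ≠ m ∧ supNint (fun i => x l i - x m i) ≤ r then (1:ℝ) else 0)
        ≤ ∏ i, ∑ j, (if ivlo (x l i) r2 j ≤ x m i ∧ x m i < ivhi (x l i) r2 j then (1:ℝ) else 0) := by
      intro m
      have h2 : (if l ≠ m ∧ supNint (fun i => x l i - x m i) ≤ r then (1:ℝ) else 0)
          ≤ ∏ i, (if nint (x m i - x l i) ≤ r then (1:ℝ) else 0) := by
        rw [Fintype.prod_boole]
        split_ifs with h1 h2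
        · exact le_refl _
        · exact absurd (fun i => ((supNint_le_iff d hd x l m r).1 h1.2) i) h2
        · norm_num
        · norm_num
      refine h2.trans (Finset.prod_le_prod (fun i _ => ?_) (fun i _ => ?_))
      · split_ifs <;> norm_num
      · exact ball_le_sumchi (x l i) r r2 (x m i) (hx l i).1 (hx l i).2 (hx m i).1 (hx m i).2
          hrr2 hr2
    refine (Finset.sum_le_sum fun m _ => step1 m).trans ?_
    have hW := Wcount d N x hx (x l) (fun i => hx l i) r2 (hr.trans hrr2) hr2
    rw [abs_le] at hW
    linarith [hW.2]
  refine (Finset.sum_le_sum hbound).trans ?_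
  rw [Finset.sum_const, Nat.card_Icc, nsmul_eq_mul]
  simp

set_option maxHeartbeats 1000000 in
lemma pair_lower (d N : ℕ) (hd : 1 ≤ d) (x : ℕ → Fin d → ℝ)
    (hx : ∀ n i, 0 ≤ x n i ∧ x n i < 1) (r : ℝ) (hr : 0 < r) (hr2 : r ≤ 1/2) :
    (N:ℝ) * (N * (2*r)^d - 6^d * (N * starDiscrepancy d N x) - 1) ≤ (pairCount d x N r : ℝ) := by
  have hcast : (pairCount d x N r : ℝ) = ∑ l ∈ Finset.Icc 1 N, ∑ m ∈ Finset.Icc 1 N,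
      (if l ≠ m ∧ supNint (fun i => x l i - x m i) ≤ r then (1:ℝ) else 0) := by
    rw [pairCount, Finset.card_filter]
    push_cast
    rw [Finset.sum_product]
  rw [hcast]
  have hbound : ∀ l ∈ Finset.Icc 1 N, N * (2*r)^d - 6^d * (N * starDiscrepancy d N x) - 1
      ≤ (∑ m ∈ Finset.Icc 1 N,
        (if l ≠ m ∧ supNint (fun i => x l i - x m i) ≤ r then (1:ℝ) else 0)) := by
    intro l hl
    have step1 : ∀ m, (∏ i, ∑ j, (if ivlo (x l i) r j ≤ x m i ∧ x m i < ivhi (x l i) r j then (1:ℝ) else 0))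
        - (if m = l then (1:ℝ) else 0)
        ≤ (if l ≠ m ∧ supNint (fun i => x l i - x m i) ≤ r then (1:ℝ) else 0) := by
      intro m
      have h2 : (∏ i, ∑ j, (if ivlo (x l i) r j ≤ x m i ∧ x m i < ivhi (x l i) r j then (1:ℝ) else 0))
          ≤ ∏ i, (if nint (x m i - x l i) ≤ r then (1:ℝ) else 0) := by
        refine Finset.prod_le_prod (fun i _ => ?_) (fun i _ => ?_)
        · exact Finset.sum_nonneg fun j _ => by split_ifs <;> norm_num
        · exact sumchi_le (x l i) r (x m i) (hx l i).1 (hx l i).2 (hx m i).1 (hx m i).2 hr hr2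
      rw [Fintype.prod_boole] at h2
      rcases Classical.em (m = l) with he|he
      · rw [if_pos he]
        have hle1 : (∏ i, ∑ j, (if ivlo (x l i) r j ≤ x m i ∧ x m i < ivhi (x l i) r j then (1:ℝ) else 0)) ≤ 1 :=
          h2.trans (by split_ifs <;> norm_num)
        have hge0 : (0:ℝ) ≤ (if l ≠ m ∧ supNint (fun i => x l i - x m i) ≤ r then (1:ℝ) else 0) := by
          split_ifs <;> norm_num
        linarith
      · rw [if_neg he, sub_zero]
        refine h2.trans ?_
        split_ifs with h3 h4
        · exact le_refl _
        · exact absurd ⟨fun hlm => he hlm.symm, (supNint_le_iff d hd x l m r).2 h3⟩ h4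
        · norm_num
        · norm_num
    have hsum1 : ∑ m ∈ Finset.Icc 1 N, (if m = l then (1:ℝ) else 0) = 1 := by
      rw [Finset.sum_ite_eq' (Finset.Icc 1 N) l (fun _ => (1:ℝ)), if_pos hl]
    have hW := Wcount d N x hx (x l) (fun i => hx l i) r hr hr2
    rw [abs_le] at hW
    calc (N:ℝ) * (2*r)^d - 6^d * (N * starDiscrepancy d N x) - 1
        ≤ (∑ m ∈ Finset.Icc 1 N, ∏ i, ∑ j,
            (if ivlo (x l i) r j ≤ x m i ∧ x m i < ivhi (x l i) r j then (1:ℝ) else 0)) - 1 := by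
          linarith [hW.1]
      _ = ∑ m ∈ Finset.Icc 1 N, ((∏ i, ∑ j,
            (if ivlo (x l i) r j ≤ x m i ∧ x m i < ivhi (x l i) r j then (1:ℝ) else 0))
            - (if m = l then (1:ℝ) else 0)) := by
          rw [Finset.sum_sub_distrib, hsum1]
      _ ≤ _ := Finset.sum_le_sum fun m _ => step1 m
  refine le_trans ?_ (Finset.sum_le_sum hbound)
  rw [Finset.sum_const, Nat.card_Icc, nsmul_eq_mul]
  simp

theorem stmt2 (d : ℕ) (hd : 1 ≤ d) (x : ℕ → Fin d → ℝ)
    (hx : ∀ n, ∀ i, x n i ∈ Set.Ico (0 : ℝ) 1)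
    (C : ℝ) (hC : 0 < C)
    (hld : ∀ N : ℕ, 2 ≤ N → starDiscrepancy d N x ≤ C * (Real.log N) ^ d / N) :
    ∀ α : ℝ, 0 < α → α < 1 / d → ∀ s : ℝ, 0 < s →
      Filter.Tendsto
        (fun N : ℕ => (pairCount d x N (s / (N : ℝ) ^ α) : ℝ) /
          ((N : ℝ) ^ 2 * (2 * s / (N : ℝ) ^ α) ^ d)) Filter.atTop (nhds 1) := by
  intro α hα hα1 s hs
  have hd0 : (0:ℝ) < (d:ℝ) := by exact_mod_cast Nat.lt_of_lt_of_le Nat.zero_lt_one hd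
  have hβ : 0 < 1 - α * (d:ℝ) := by
    have h1 : α * (d:ℝ) < (1/(d:ℝ)) * d := mul_lt_mul_of_pos_right hα1 hd0
    rw [one_div, inv_mul_cancel₀ hd0.ne'] at h1
    linarith
  have hxn : ∀ n i, 0 ≤ x n i ∧ x n i < 1 := fun n i => ⟨(hx n i).1, (hx n i).2⟩
  have key : ∀ N : ℕ, 1 ≤ N → (N:ℝ) * (2*s/(N:ℝ)^α)^d = (2*s)^d * (N:ℝ)^(1 - α*d) := by
    intro N hN
    have hNpos : (0:ℝ) < N := by exact_mod_cast hN
    have h1 : ((N:ℝ)^α)^d = (N:ℝ)^(α*(d:ℝ)) := by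
      rw [← Real.rpow_natCast ((N:ℝ)^α) d, ← Real.rpow_mul hNpos.le]
    have h2 : (0:ℝ) < (N:ℝ)^(α*(d:ℝ)) := Real.rpow_pos_of_pos hNpos _
    rw [div_pow, h1, Real.rpow_sub hNpos, Real.rpow_one]
    field_simp
  -- limit lemmas
  have hlog : Filter.Tendsto (fun N : ℕ => (Real.log N)^d / (N:ℝ)^(1-α*d))
      Filter.atTop (nhds 0) := by
    have h := (isLittleO_log_rpow_rpow_atTop (d:ℝ) hβ).tendsto_div_nhds_zero
    have h2 := h.comp tendsto_natCast_atTop_atTop (α := ℕ)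
    refine h2.congr fun N => ?_
    simp only [Function.comp_apply, Real.rpow_natCast]
  have hinv : Filter.Tendsto (fun N : ℕ => ((N:ℝ)^(1-α*d))⁻¹) Filter.atTop (nhds 0) := by
    have h := (tendsto_rpow_neg_atTop hβ).comp tendsto_natCast_atTop_atTop (α := ℕ)
    refine h.congr' ?_
    filter_upwards [Filter.eventually_ge_atTop 1] with N hN
    have hNpos : (0:ℝ) < N := by exact_mod_cast hN
    rw [Function.comp_apply, Real.rpow_neg hNpos.le]
  have hg : Filter.Tendsto (fun N : ℕ => (6^d*C*(Real.log N)^d + 1) / ((2*s)^d * (N:ℝ)^(1-α*d)))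
      Filter.atTop (nhds 0) := by
    have hlim := (hlog.const_mul (6^d*C/(2*s)^d)).add (hinv.const_mul (1/(2*s)^d))
    rw [mul_zero, mul_zero, add_zero] at hlim
    refine hlim.congr' ?_
    filter_upwards [Filter.eventually_ge_atTop 1] with N hN
    have hNβ : (0:ℝ) < (N:ℝ)^(1-α*d) := Real.rpow_pos_of_pos (by exact_mod_cast hN) _
    have h2s : (0:ℝ) < (2*s)^d := by positivity
    field_simp
  have hsmall : ∀ᶠ N : ℕ in Filter.atTop, s/(N:ℝ)^α < 1/4 := by
    have h := (tendsto_rpow_neg_atTop hα).comp tendsto_natCast_atTop_atTop (α := ℕ)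
    have h2 := h.const_mul s
    rw [mul_zero] at h2
    have h3 : Filter.Tendsto (fun N : ℕ => s/(N:ℝ)^α) Filter.atTop (nhds 0) := by
      refine h2.congr' ?_
      filter_upwards [Filter.eventually_ge_atTop 1] with N hN
      have hNpos : (0:ℝ) < N := by exact_mod_cast hN
      rw [Function.comp_apply, Real.rpow_neg hNpos.le, div_eq_mul_inv]
    exact h3.eventually (eventually_lt_nhds (by norm_num : (0:ℝ) < 1/4))
  -- the squeeze
  refine tendsto_of_tendsto_of_tendsto_of_le_of_le'
    (g := fun N : ℕ => 1 - (6^d*C*(Real.log N)^d + 1) / ((2*s)^d * (N:ℝ)^(1-α*d)))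
    (h := fun N : ℕ => (1+1/(N:ℝ))^d + (6^d*C*(Real.log N)^d + 1) / ((2*s)^d * (N:ℝ)^(1-α*d)))
    ?_ ?_ ?_ ?_
  · simpa using tendsto_const_nhds.sub hg
  · have h1 : Filter.Tendsto (fun N : ℕ => (1 + 1/(N:ℝ))^d) Filter.atTop (nhds 1) := by
      have h2 := ((tendsto_const_nhds (x := (1:ℝ)) (f := Filter.atTop (α := ℕ))).add
        tendsto_one_div_atTop_nhds_zero_nat).pow d
      simpa using h2
    simpa using h1.add hg
  · -- lower bound eventually
    filter_upwards [Filter.eventually_ge_atTop 2, hsmall] with N hN2 hN4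
    have hN1 : 1 ≤ N := le_trans (by norm_num) hN2
    have hNpos : (0:ℝ) < N := by exact_mod_cast hN1
    set r : ℝ := s/(N:ℝ)^α with hrdef
    have hrpos : 0 < r := div_pos hs (Real.rpow_pos_of_pos hNpos _)
    have hrhalf : r ≤ 1/2 := by rw [hrdef]; linarith [hN4]
    have hD0 := starDiscrepancy_nonneg d N x
    have hDle : (N:ℝ) * starDiscrepancy d N x ≤ C * (Real.log N)^d := by
      have h := hld N hN2
      calc (N:ℝ) * starDiscrepancy d N x ≤ N * (C * (Real.log N)^d / N) :=
            mul_le_mul_of_nonneg_left h hNpos.le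
        _ = C * (Real.log N)^d := by field_simp
    have hQ := key N hN1
    have hQpos : (0:ℝ) < (2*s)^d * (N:ℝ)^(1-α*d) := by
      have := Real.rpow_pos_of_pos hNpos (1-α*d)
      positivity
    have hdenom : (0:ℝ) < (N:ℝ)^2 * (2*s/(N:ℝ)^α)^d := by
      have h2r : (0:ℝ) < 2*s/(N:ℝ)^α := by positivity
      positivity
    rw [le_div_iff₀ hdenom]
    have h2r : 2*s/(N:ℝ)^α = 2*r := by rw [hrdef]; ring
    have hdenomQ : (N:ℝ)^2 * (2*s/(N:ℝ)^α)^d = N * ((2*s)^d * (N:ℝ)^(1-α*d)) := by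
      rw [pow_two, mul_assoc, hQ]
    have hQr : (N:ℝ)*(2*r)^d = (2*s)^d * (N:ℝ)^(1-α*d) := by rw [← h2r]; exact hQ
    have hPL := pair_lower d N hd x hxn r hrpos hrhalf
    have hAest : 6^d * ((N:ℝ) * starDiscrepancy d N x) ≤ 6^d * C * (Real.log N)^d := by
      calc 6^d * ((N:ℝ) * starDiscrepancy d N x) ≤ 6^d * (C * (Real.log N)^d) :=
          mul_le_mul_of_nonneg_left hDle (by positivity)
        _ = 6^d * C * (Real.log N)^d := by ring
    have hrd : (0:ℝ) < (N:ℝ)*(2*r)^d := mul_pos hNpos (pow_pos (by linarith) d)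
    have heq : (1 - (6^d*C*(Real.log N)^d + 1) / ((2*s)^d * (N:ℝ)^(1-α*d)))
        * ((N:ℝ)^2 * (2*s/(N:ℝ)^α)^d)
        = (N:ℝ) * ((N:ℝ)*(2*r)^d - (6^d*C*(Real.log N)^d) - 1) := by
      rw [hdenomQ, ← hQr]
      field_simp
      ring
    rw [heq]
    refine le_trans ?_ hPL
    refine mul_le_mul_of_nonneg_left ?_ hNpos.le
    linarith [hAest]
  · -- upper bound eventually
    filter_upwards [Filter.eventually_ge_atTop 2, hsmall] with N hN2 hN4
    have hN1 : 1 ≤ N := le_trans (by norm_num) hN2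
    have hNpos : (0:ℝ) < N := by exact_mod_cast hN1
    set r : ℝ := s/(N:ℝ)^α with hrdef
    have hrpos : 0 < r := div_pos hs (Real.rpow_pos_of_pos hNpos _)
    have hD0 := starDiscrepancy_nonneg d N x
    have hDle : (N:ℝ) * starDiscrepancy d N x ≤ C * (Real.log N)^d := by
      have h := hld N hN2
      calc (N:ℝ) * starDiscrepancy d N x ≤ N * (C * (Real.log N)^d / N) :=
            mul_le_mul_of_nonneg_left h hNpos.le
        _ = C * (Real.log N)^d := by field_simp
    have hQ := key N hN1
    have hdenom : (0:ℝ) < (N:ℝ)^2 * (2*s/(N:ℝ)^α)^d := by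
      have h2r : (0:ℝ) < 2*s/(N:ℝ)^α := by positivity
      positivity
    rw [div_le_iff₀ hdenom]
    have h2r : 2*s/(N:ℝ)^α = 2*r := by rw [hrdef]; ring
    have hdenomQ : (N:ℝ)^2 * (2*s/(N:ℝ)^α)^d = N * ((2*s)^d * (N:ℝ)^(1-α*d)) := by
      rw [pow_two, mul_assoc, hQ]
    have hQr : (N:ℝ)*(2*r)^d = (2*s)^d * (N:ℝ)^(1-α*d) := by rw [← h2r]; exact hQ
    have hAest : 6^d * ((N:ℝ) * starDiscrepancy d N x) ≤ 6^d * C * (Real.log N)^d := by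
      calc 6^d * ((N:ℝ) * starDiscrepancy d N x) ≤ 6^d * (C * (Real.log N)^d) :=
          mul_le_mul_of_nonneg_left hDle (by positivity)
        _ = 6^d * C * (Real.log N)^d := by ring
    set r2 : ℝ := r + r/(N:ℝ) with hr2def
    have hrr2 : r < r2 := by
      have h0 : 0 < r/(N:ℝ) := div_pos hrpos hNpos
      rw [hr2def]; linarith
    have hr2half : r2 ≤ 1/2 := by
      have h0 : r/(N:ℝ) ≤ r := div_le_self hrpos.le (by exact_mod_cast hN1)
      rw [hr2def]; linarith [hN4]
    have hPU := pair_upper d N hd x hxn r r2 hrpos hrr2 hr2half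
    refine hPU.trans ?_
    have h2r2 : (2*r2)^d = (2*r)^d * (1+1/(N:ℝ))^d := by
      rw [← mul_pow]
      congr 1
      rw [hr2def]
      field_simp
    have heq2 : ((1+1/(N:ℝ))^d + (6^d*C*(Real.log N)^d + 1)/((2*s)^d * (N:ℝ)^(1-α*d)))
        * ((N:ℝ)^2 * (2*s/(N:ℝ)^α)^d)
        = (N:ℝ) * ((N:ℝ)*((2*r)^d * (1+1/(N:ℝ))^d) + (6^d*C*(Real.log N)^d + 1)) := by
      rw [hdenomQ, ← hQr]
      field_simp
    rw [heq2]
    refine mul_le_mul_of_nonneg_left ?_ hNpos.le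
    rw [h2r2]
    linarith [hAest]
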